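/- For a fixed m \ge r \ge 0, the ordinary generating function identity \sum_{n\ge 0} S_r(n, m) z^n = z^m / ((1-rz)(1-(r+1)z)\cdots(1-mz)) holds as formal power series. -/

import Mathlib

/-- `rS r n k` is the r-Stirling number of the second kind `S_r(n+r, k+r)`. -/
def rS (r : ℕ) : ℕ → ℕ → ℕ
  | 0, 0 => 1
  | 0, _ + 1 => 0
  | n + 1, 0 => r * rS r n 0
  | n + 1, k + 1 => (k + 1 + r) * rS r n (k + 1) + rS r n k

/-- The r-Stirling number of the second kind `S_r(n,k)`. -/
def rStirling (r n k : ℕ) : ℕ :=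
  if r ≤ n ∧ r ≤ k then rS r (n - r) (k - r) else 0

/-- The r-Bell polynomial `B_{n,r}(x)` as a real function. -/
def rBellPoly (r n : ℕ) (x : ℝ) : ℝ :=
  ∑ k ∈ Finset.range (n + 1), (rS r n k : ℝ) * x ^ k

/-- The r-Bell number `B_{n,r}`. -/
def rBell (r n : ℕ) : ℕ :=
  ∑ k ∈ Finset.range (n + 1), rS r n k

open PowerSeries

lemma rS_zero (r n : ℕ) : rS r n 0 = r ^ n := by
  induction n with
  | zero => simp [rS]
  | succ n ih => rw [rS, ih, pow_succ]; ring

lemma rStirling_diag (r n : ℕ) : rStirling r n r = if r ≤ n then r ^ (n - r) else 0 := by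
  simp [rStirling, rS_zero]

lemma rStirling_zero_succ (r m : ℕ) : rStirling r 0 (m + 1) = 0 := by
  rcases Nat.eq_zero_or_pos r with hr | hr
  · subst hr; simp [rStirling, rS]
  · simp [rStirling, Nat.not_le.mpr hr]

lemma rStirling_rec (r m n : ℕ) (h : r ≤ m) :
    rStirling r (n + 1) (m + 1) = (m + 1) * rStirling r n (m + 1) + rStirling r n m := by
  have hm1 : r ≤ m + 1 := h.trans (Nat.le_succ m)
  rcases Nat.lt_or_ge n r with hn | hn
  · rcases Nat.lt_or_ge (n+1) r with hn1 | hn1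
    · simp [rStirling, Nat.not_le.mpr hn, Nat.not_le.mpr hn1]
    · have : r = n + 1 := le_antisymm hn1 hn
      subst this
      have : m + 1 - (n + 1) = (m - (n+1)) + 1 := by omega
      simp [rStirling, Nat.not_le.mpr hn, this, rS]
  · have h1 : n + 1 - r = (n - r) + 1 := by omega
    have h2 : m + 1 - r = (m - r) + 1 := by omega
    simp only [rStirling, hn, hm1, h, and_self, if_true, Nat.le_succ_of_le hn, h1, h2, rS]
    have : m - r + 1 + r = m + 1 := by omega
    rw [this]


lemma coeff_aux_succ (a : ℚ) (φ : ℚ⟦X⟧) (n : ℕ) :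
    coeff (n+1) (φ * (1 - C a * X)) = coeff (n+1) φ - a * coeff n φ := by
  have : φ * (1 - C a * X) = φ - C a * (φ * X) := by ring
  rw [this, map_sub, coeff_C_mul, coeff_succ_mul_X]

lemma coeff_aux_zero (a : ℚ) (φ : ℚ⟦X⟧) :
    coeff 0 (φ * (1 - C a * X)) = coeff 0 φ := by
  have : φ * (1 - C a * X) = φ - C a * (φ * X) := by ring
  rw [this, map_sub, coeff_C_mul, coeff_zero_mul_X, mul_zero, sub_zero]

lemma key_base (r : ℕ) :
    PowerSeries.mk (fun n => (rStirling r n r : ℚ)) * (1 - C (r : ℚ) * X) = X ^ r := by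
  ext n
  cases n with
  | zero =>
    rw [coeff_aux_zero, coeff_mk, coeff_X_pow, rStirling_diag]
    rcases Nat.eq_zero_or_pos r with hr | hr
    · simp [hr]
    · simp [Nat.not_le.mpr hr, hr.ne]
  | succ n =>
    rw [coeff_aux_succ, coeff_mk, coeff_mk, coeff_X_pow, rStirling_diag, rStirling_diag]
    rcases Nat.lt_or_ge (n+1) r with h1 | h1
    · simp [Nat.not_le.mpr h1, Nat.not_le.mpr (Nat.lt_of_succ_lt h1), h1.ne]
    · rcases Nat.lt_or_ge n r with h2 | h2
      · have : r = n + 1 := by omega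
        simp [h1, Nat.not_le.mpr h2, this]
      · have h3 : n + 1 - r = (n - r) + 1 := by omega
        simp only [if_pos h1, if_pos h2, h3, if_neg (by omega : ¬ n + 1 = r)]
        push_cast
        ring

lemma key_step (r m : ℕ) (h : r ≤ m) :
    PowerSeries.mk (fun n => (rStirling r n (m+1) : ℚ)) * (1 - C ((m+1 : ℕ) : ℚ) * X) =
      X * PowerSeries.mk (fun n => (rStirling r n m : ℚ)) := by
  ext n
  cases n with
  | zero => simp [coeff_aux_zero, rStirling_zero_succ]
  | succ n =>
    rw [coeff_aux_succ, coeff_mk, coeff_mk, coeff_succ_X_mul, coeff_mk, rStirling_rec r m n h]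
    push_cast
    ring

lemma key (r m : ℕ) (h : r ≤ m) :
    PowerSeries.mk (fun n => (rStirling r n m : ℚ)) *
      (∏ i ∈ Finset.Icc r m, (1 - C (i : ℚ) * X)) = X ^ m := by
  induction m, h using Nat.le_induction with
  | base => simpa using key_base r
  | succ m hm ih =>
    rw [← Finset.insert_Icc_right_eq_Icc_add_one (by omega), Finset.prod_insert (by simp),
      ← mul_assoc, key_step r m hm, mul_assoc, ih, pow_succ, mul_comm]

theorem rStirling_ogf (m r : ℕ) (h : r ≤ m) :
    PowerSeries.mk (fun n => (rStirling r n m : ℚ)) =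
      PowerSeries.X ^ m *
        (∏ i ∈ Finset.Icc r m, (1 - PowerSeries.C (i : ℚ) * PowerSeries.X))⁻¹ := by
  rw [PowerSeries.eq_mul_inv_iff_mul_eq, key r m h]
  simp [map_prod]
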